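/- Let τ ≥ 0 and let S, I, Q, R, B : ℝ → ℝ be continuous functions that are constant and nonnegative on [−τ, 0] (i.e. S(t) = S₀ ≥ 0, I(t) = I₀ ≥ 0, Q(t) = Q₀ ≥ 0, R(t) = R₀ ≥ 0, B(t) = B₀ ≥ 0 for all t ∈ [−τ, 0]), differentiable on (0, ∞), and satisfying for all t > 0 the delayed SIQRB system: S′(t) = Λ − βB(t)S(t)/(κ+B(t)) + ωR(t) − μS(t), I′(t) = βB(t−τ)S(t−τ)/(κ+B(t−τ)) − (δ+α₁+μ)I(t), Q′(t) = δI(t) − (ε+α₂+μ)Q(t), R′(t) = εQ(t) − (ω+μ)R(t), B′(t) = ηI(t) − dB(t). Then S(t) ≥ 0, I(t) ≥ 0, Q(t) ≥ 0, R(t) ≥ 0 and B(t) ≥ 0 for all t ≥ −τ. -/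

import Mathlib

open Filter Set Topology

/-- If `Z` has positive derivative at `t₁ > 0`, vanishes at `t₁`, then it cannot be
nonnegative on all of `[0, t₁)`. -/
private lemma no_left_min (Z : ℝ → ℝ) (t₁ d : ℝ) (ht₁ : 0 < t₁)
    (hZ : HasDerivAt Z d t₁) (hd : 0 < d) (hZt₁ : Z t₁ = 0)
    (hpos : ∀ u, 0 ≤ u → u < t₁ → 0 ≤ Z u) : False := by
  have hslope := hasDerivAt_iff_tendsto_slope.mp hZ
  have h1 : ∀ᶠ u in 𝓝[≠] t₁, 0 < slope Z t₁ u :=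
    hslope.eventually (eventually_gt_nhds hd)
  have h2 : (𝓝[<] t₁) ≤ (𝓝[≠] t₁) :=
    nhdsWithin_mono _ (fun x hx => ne_of_lt hx)
  have h3 : ∀ᶠ u in 𝓝[<] t₁, 0 < slope Z t₁ u := h1.filter_mono h2
  have h4 : ∀ᶠ u in 𝓝[<] t₁, u ∈ Set.Ioo 0 t₁ :=
    eventually_mem_set.mpr (Ioo_mem_nhdsLT_of_mem ⟨ht₁, le_refl t₁⟩)
  obtain ⟨u, hu1, hu2⟩ := (h3.and h4).exists
  have hZu : 0 ≤ Z u := hpos u hu2.1.le hu2.2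
  rw [slope_def_field, hZt₁, sub_zero] at hu1
  rcases div_pos_iff.mp hu1 with ⟨_, hx⟩ | ⟨hx, _⟩
  · linarith [hu2.2]
  · linarith

/-- Lower bound for the incidence term `β b s / (κ + b)` when `b, s ≥ -c`, `s ≤ M`,
`c ≤ κ/2`. -/
private lemma frac_bound (β κ c M b s : ℝ) (hβ : 0 < β) (hκ : 0 < κ) (hc : 0 < c)
    (hcκ : c ≤ κ / 2) (hb : -c ≤ b) (hs : -c ≤ s) (hsM : s ≤ M) (hM : 0 ≤ M) :
    -(β * c + 2 * β * M * c / κ) ≤ β * b * s / (κ + b) := by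
  have hden0 : 0 < κ + b := by linarith
  have hA0 : 0 ≤ 2 * β * M * c / κ :=
    div_nonneg (mul_nonneg (mul_nonneg (by linarith : (0:ℝ) ≤ 2 * β) hM) hc.le) hκ.le
  have hA : 2 * β * M * c / κ * κ = 2 * β * M * c := div_mul_cancel₀ _ (ne_of_gt hκ)
  rw [le_div_iff₀ hden0]
  rcases le_or_gt 0 b with hb0 | hb0
  · have h5 : 0 ≤ β * b * (s + c) :=
      mul_nonneg (mul_nonneg hβ.le hb0) (by linarith)
    have h6 : 0 ≤ β * M * c := mul_nonneg (mul_nonneg hβ.le hM) hc.le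
    have h7 : 0 ≤ 2 * β * M * c / κ * b := mul_nonneg hA0 hb0
    have h8 : 0 ≤ β * c * κ := mul_nonneg (mul_nonneg hβ.le hc.le) hκ.le
    nlinarith [h5, h6, h7, h8, hA]
  · have h1 : -(c * M) ≤ b * s := by
      rcases le_or_gt 0 s with hs0 | hs0
      · have h9 : 0 ≤ (b + c) * s := mul_nonneg (by linarith) hs0
        have h10 : c * s ≤ c * M := mul_le_mul_of_nonneg_left hsM hc.le
        nlinarith [h9, h10]
      · nlinarith [mul_pos_of_neg_of_neg hb0 hs0, mul_nonneg hc.le hM]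
    have h2 : 2 * β * M * c / κ * (κ / 2) ≤ 2 * β * M * c / κ * (κ + b) :=
      mul_le_mul_of_nonneg_left (by linarith : κ / 2 ≤ κ + b) hA0
    have h3 : β * -(c * M) ≤ β * (b * s) := mul_le_mul_of_nonneg_left h1 hβ.le
    have h4 : 0 ≤ β * c * (κ + b) := mul_nonneg (mul_nonneg hβ.le hc.le) hden0.le
    nlinarith [h2, h3, h4, hA]

/-- Generic contradiction step for one component touching the exponential barrier. -/
private lemma component_case (X F : ℝ → ℝ) (p K t₁ c d : ℝ)
    (ht₁ : 0 < t₁) (hcdef : p * Real.exp (K * t₁) = c)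
    (hX' : HasDerivAt X d t₁) (hXt₁ : X t₁ = -c)
    (hFX : ∀ u, F u ≤ X u)
    (hbefore : ∀ u, 0 ≤ u → u < t₁ → 0 < F u + p * Real.exp (K * u))
    (hdpos : 0 < d + p * Real.exp (K * t₁) * K) : False := by
  have hexp : HasDerivAt (fun u => p * Real.exp (K * u)) (p * Real.exp (K * t₁) * K) t₁ := by
    have h : HasDerivAt (fun u => p * Real.exp (K * u)) (p * (Real.exp (K * t₁) * (K * 1))) t₁ :=
      (((hasDerivAt_id t₁).const_mul K).exp).const_mul p
    convert h using 1
    simp only [id_eq, mul_one]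
    ring
  have hZ := hX'.add hexp
  exact no_left_min (fun u => X u + p * Real.exp (K * u)) t₁ _ ht₁ hZ hdpos
    (by beta_reduce; rw [hXt₁, hcdef]; ring)
    (fun u h1 h2 => by have := hbefore u h1 h2; have := hFX u; beta_reduce; linarith)

set_option maxHeartbeats 1600000 in
/-- Non-negativity of solutions of the delayed SIQRB cholera model:
if the five state functions are continuous, constant and nonnegative on `[-τ, 0]`,
and satisfy the delayed SIQRB system for all `t > 0`, then they stay nonnegative
for all `t ≥ -τ`. -/
theorem siqrb_delayed_nonneg
    (Λ μ β κ η d ω δ ε α₁ α₂ τ : ℝ)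
    (hΛ : 0 < Λ) (hμ : 0 < μ) (hβ : 0 < β) (hκ : 0 < κ) (hη : 0 < η) (hd : 0 < d)
    (hω : 0 ≤ ω) (hδ : 0 ≤ δ) (hε : 0 ≤ ε) (hα₁ : 0 ≤ α₁) (hα₂ : 0 ≤ α₂) (hτ : 0 ≤ τ)
    (S I Q R B : ℝ → ℝ) (S₀ I₀ Q₀ R₀ B₀ : ℝ)
    (hScont : Continuous S) (hIcont : Continuous I) (hQcont : Continuous Q)
    (hRcont : Continuous R) (hBcont : Continuous B)
    (hS₀ : 0 ≤ S₀) (hI₀ : 0 ≤ I₀) (hQ₀ : 0 ≤ Q₀) (hR₀ : 0 ≤ R₀) (hB₀ : 0 ≤ B₀)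
    (hSic : ∀ t ∈ Set.Icc (-τ) (0 : ℝ), S t = S₀)
    (hIic : ∀ t ∈ Set.Icc (-τ) (0 : ℝ), I t = I₀)
    (hQic : ∀ t ∈ Set.Icc (-τ) (0 : ℝ), Q t = Q₀)
    (hRic : ∀ t ∈ Set.Icc (-τ) (0 : ℝ), R t = R₀)
    (hBic : ∀ t ∈ Set.Icc (-τ) (0 : ℝ), B t = B₀)
    (hS' : ∀ t > (0 : ℝ),
      HasDerivAt S (Λ - β * B t * S t / (κ + B t) + ω * R t - μ * S t) t)
    (hI' : ∀ t > (0 : ℝ),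
      HasDerivAt I (β * B (t - τ) * S (t - τ) / (κ + B (t - τ)) - (δ + α₁ + μ) * I t) t)
    (hQ' : ∀ t > (0 : ℝ), HasDerivAt Q (δ * I t - (ε + α₂ + μ) * Q t) t)
    (hR' : ∀ t > (0 : ℝ), HasDerivAt R (ε * Q t - (ω + μ) * R t) t)
    (hB' : ∀ t > (0 : ℝ), HasDerivAt B (η * I t - d * B t) t) :
    ∀ t, -τ ≤ t → 0 ≤ S t ∧ 0 ≤ I t ∧ 0 ≤ Q t ∧ 0 ≤ R t ∧ 0 ≤ B t := by
  intro t ht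
  rcases le_or_gt t 0 with h0 | h0
  · rw [hSic t ⟨ht, h0⟩, hIic t ⟨ht, h0⟩, hQic t ⟨ht, h0⟩, hRic t ⟨ht, h0⟩, hBic t ⟨ht, h0⟩]
    exact ⟨hS₀, hI₀, hQ₀, hR₀, hB₀⟩
  -- t > 0.  Set up the barrier.
  have hτt : -τ ≤ t := by linarith
  obtain ⟨MS, hMS⟩ :=
    (isCompact_Icc : IsCompact (Set.Icc (-τ) t)).exists_bound_of_continuousOn
      hScont.continuousOn
  set M : ℝ := max MS (κ / 2) with hMdef
  have hM0 : 0 ≤ M := le_trans (by linarith : (0:ℝ) ≤ κ / 2) (le_max_right _ _)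
  have hMκ : κ / 2 ≤ M := le_max_right _ _
  have hMs : ∀ s ∈ Set.Icc (-τ) t, S s ≤ M := by
    intro s hs
    have h := hMS s hs
    rw [Real.norm_eq_abs] at h
    exact le_trans (le_trans (le_abs_self _) h) (le_max_left _ _)
  set K : ℝ := 1 + β + 2 * β * M / κ + ω + δ + ε + η with hKdef
  have h2βM : 0 ≤ 2 * β * M / κ :=
    div_nonneg (mul_nonneg (by linarith : (0:ℝ) ≤ 2 * β) hM0) hκ.le
  have hK : 0 < K := by rw [hKdef]; linarith
  set εm : ℝ := κ / 2 * Real.exp (-(K * t)) with hεmdef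
  have hεm : 0 < εm := by rw [hεmdef]; positivity
  set F : ℝ → ℝ := fun u => min (min (S u) (I u)) (min (Q u) (min (R u) (B u))) with hFdef
  have hFc : Continuous F := (hScont.min hIcont).min (hQcont.min (hRcont.min hBcont))
  have hFS : ∀ u, F u ≤ S u := fun u => le_trans (min_le_left _ _) (min_le_left _ _)
  have hFI : ∀ u, F u ≤ I u := fun u => le_trans (min_le_left _ _) (min_le_right _ _)
  have hFQ : ∀ u, F u ≤ Q u := fun u => le_trans (min_le_right _ _) (min_le_left _ _)
  have hFR : ∀ u, F u ≤ R u :=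
    fun u => le_trans (min_le_right _ _) (le_trans (min_le_right _ _) (min_le_left _ _))
  have hFB : ∀ u, F u ≤ B u :=
    fun u => le_trans (min_le_right _ _) (le_trans (min_le_right _ _) (min_le_right _ _))
  have hF00 : 0 ≤ F 0 := by
    have h0m : (0:ℝ) ∈ Set.Icc (-τ) (0:ℝ) := ⟨by linarith, le_refl 0⟩
    simp only [hFdef, hSic 0 h0m, hIic 0 h0m, hQic 0 h0m, hRic 0 h0m, hBic 0 h0m]
    exact le_min (le_min hS₀ hI₀) (le_min hQ₀ (le_min hR₀ hB₀))
  -- Main barrier claim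
  have hmain : ∀ p, 0 < p → p ≤ εm → ∀ u, 0 ≤ u → u ≤ t →
      0 < F u + p * Real.exp (K * u) := by
    intro p hp hpεm
    by_contra hcon
    push_neg at hcon
    obtain ⟨u₀, hu₀1, hu₀2, hu₀3⟩ := hcon
    set bad : Set ℝ := Set.Icc 0 t ∩ {u | F u + p * Real.exp (K * u) ≤ 0} with hbaddef
    have hgc : Continuous fun u => F u + p * Real.exp (K * u) :=
      hFc.add (continuous_const.mul (Real.continuous_exp.comp (continuous_const.mul
        continuous_id)))
    have hclosed : IsClosed bad :=
      isClosed_Icc.inter (isClosed_le hgc continuous_const)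
    have hne : bad.Nonempty := ⟨u₀, ⟨hu₀1, hu₀2⟩, hu₀3⟩
    have hbdd : BddBelow bad := BddBelow.mono Set.inter_subset_left bddBelow_Icc
    set t₁ : ℝ := sInf bad with ht₁def
    have ht₁mem : t₁ ∈ bad := hclosed.csInf_mem hne hbdd
    have ht₁0 : 0 ≤ t₁ := ht₁mem.1.1
    have ht₁t : t₁ ≤ t := ht₁mem.1.2
    have ht₁le : F t₁ + p * Real.exp (K * t₁) ≤ 0 := ht₁mem.2
    have ht₁pos : 0 < t₁ := by
      rcases lt_or_eq_of_le ht₁0 with h | h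
      · exact h
      · exfalso
        have hc0 := ht₁le
        rw [← h, mul_zero, Real.exp_zero, mul_one] at hc0
        linarith
    have hbefore : ∀ u, 0 ≤ u → u < t₁ → 0 < F u + p * Real.exp (K * u) := by
      intro u h1 h2
      by_contra hcu
      push_neg at hcu
      have hmem : u ∈ bad := ⟨⟨h1, by linarith⟩, hcu⟩
      exact absurd (csInf_le hbdd hmem) (not_le.mpr h2)
    obtain ⟨c, hcdef⟩ : ∃ c, p * Real.exp (K * t₁) = c := ⟨_, rfl⟩
    have hc : 0 < c := hcdef ▸ (by positivity)
    have hcκ : c ≤ κ / 2 := by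
      have h1 : Real.exp (K * t₁) ≤ Real.exp (K * t) :=
        Real.exp_le_exp.mpr (mul_le_mul_of_nonneg_left ht₁t hK.le)
      have h2 : p * Real.exp (K * t₁) ≤ εm * Real.exp (K * t) :=
        mul_le_mul hpεm h1 (Real.exp_pos _).le hεm.le
      have h3 : εm * Real.exp (K * t) = κ / 2 := by
        rw [hεmdef, mul_assoc, ← Real.exp_add]
        simp
      rw [hcdef] at h2
      linarith [h2, h3.symm ▸ h2]
    have hcM : c ≤ M := le_trans hcκ hMκ
    -- values at t₁ itself, by a limit from the left
    have hFt₁ : -c ≤ F t₁ := by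
      have htend : Tendsto (fun u => F u + p * Real.exp (K * u)) (𝓝[<] t₁)
          (𝓝 (F t₁ + p * Real.exp (K * t₁))) :=
        (hgc.tendsto t₁).mono_left nhdsWithin_le_nhds
      have hev : ∀ᶠ u in 𝓝[<] t₁, 0 ≤ F u + p * Real.exp (K * u) := by
        filter_upwards [eventually_mem_set.mpr
          (Ioo_mem_nhdsLT_of_mem (⟨ht₁pos, le_refl t₁⟩ : t₁ ∈ Set.Ioc 0 t₁))] with u hu
        exact (hbefore u hu.1.le hu.2).le
      have hlim : 0 ≤ F t₁ + p * Real.exp (K * t₁) := ge_of_tendsto htend hev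
      rw [hcdef] at hlim
      linarith
    have hlowt₁ : -c ≤ S t₁ ∧ -c ≤ I t₁ ∧ -c ≤ Q t₁ ∧ -c ≤ R t₁ ∧ -c ≤ B t₁ :=
      ⟨le_trans hFt₁ (hFS t₁), le_trans hFt₁ (hFI t₁), le_trans hFt₁ (hFQ t₁),
        le_trans hFt₁ (hFR t₁), le_trans hFt₁ (hFB t₁)⟩
    -- lower bound on [-τ, t₁]
    have hlow : ∀ s, -τ ≤ s → s ≤ t₁ →
        -c ≤ S s ∧ -c ≤ I s ∧ -c ≤ Q s ∧ -c ≤ R s ∧ -c ≤ B s := by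
      intro s hs1 hs2
      rcases le_or_gt s 0 with hs0 | hs0
      · rw [hSic s ⟨hs1, hs0⟩, hIic s ⟨hs1, hs0⟩, hQic s ⟨hs1, hs0⟩, hRic s ⟨hs1, hs0⟩,
          hBic s ⟨hs1, hs0⟩]
        exact ⟨by linarith, by linarith, by linarith, by linarith, by linarith⟩
      rcases eq_or_lt_of_le hs2 with rfl | hslt
      · exact hlowt₁
      · have h := hbefore s hs0.le hslt
        have hexple : p * Real.exp (K * s) ≤ c := by
          rw [← hcdef]
          exact mul_le_mul_of_nonneg_left
            (Real.exp_le_exp.mpr (mul_le_mul_of_nonneg_left hslt.le hK.le)) hp.le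
        exact ⟨by linarith [hFS s], by linarith [hFI s], by linarith [hFQ s],
          by linarith [hFR s], by linarith [hFB s]⟩
    -- one of the components touches the barrier at t₁
    have hsplit : S t₁ ≤ -c ∨ I t₁ ≤ -c ∨ Q t₁ ≤ -c ∨ R t₁ ≤ -c ∨ B t₁ ≤ -c := by
      have h : F t₁ ≤ -c := by rw [← hcdef]; linarith
      simp only [hFdef, min_le_iff] at h
      tauto
    -- common nonnegativity facts
    have hβc : 0 ≤ β * c := (mul_pos hβ hc).le
    have hMc : 0 ≤ 2 * β * M * c / κ :=
      div_nonneg (mul_nonneg (mul_nonneg (by linarith : (0:ℝ) ≤ 2 * β) hM0) hc.le) hκ.le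
    have hωc : 0 ≤ ω * c := mul_nonneg hω hc.le
    have hδc : 0 ≤ δ * c := mul_nonneg hδ hc.le
    have hεc : 0 ≤ ε * c := mul_nonneg hε hc.le
    have hηc : 0 ≤ η * c := mul_nonneg hη.le hc.le
    have hμc : 0 ≤ μ * c := mul_nonneg hμ.le hc.le
    have hKc : K * c = c + β * c + 2 * β * M * c / κ + ω * c + δ * c + ε * c + η * c := by
      rw [hKdef]; ring
    clear_value K M t₁ bad
    rcases hsplit with h | h | h | h | h
    · -- S touches the barrier
      have hXt₁ : S t₁ = -c := le_antisymm h hlowt₁.1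
      have hfb := frac_bound β κ c M (B t₁) c hβ hκ hc hcκ hlowt₁.2.2.2.2
        (by linarith) hcM hM0
      refine component_case S F p K t₁ c _ ht₁pos hcdef (hS' t₁ ht₁pos) hXt₁ hFS hbefore ?_
      have heq : β * B t₁ * S t₁ / (κ + B t₁) = -(β * B t₁ * c / (κ + B t₁)) := by
        rw [hXt₁]; ring
      rw [heq, hXt₁, hcdef]
      have hωR : ω * -c ≤ ω * R t₁ := mul_le_mul_of_nonneg_left hlowt₁.2.2.2.1 hω
      linarith [hfb, hωR, hKc]
    · -- I touches the barrier
      have hXt₁ : I t₁ = -c := le_antisymm h hlowt₁.2.1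
      have hlows := hlow (t₁ - τ) (by linarith) (by linarith)
      have hSM : S (t₁ - τ) ≤ M := hMs (t₁ - τ) ⟨by linarith, by linarith⟩
      have hfb := frac_bound β κ c M (B (t₁ - τ)) (S (t₁ - τ)) hβ hκ hc hcκ
        hlows.2.2.2.2 hlows.1 hSM hM0
      refine component_case I F p K t₁ c _ ht₁pos hcdef (hI' t₁ ht₁pos) hXt₁ hFI hbefore ?_
      rw [hXt₁, hcdef]
      have h1 : 0 ≤ (δ + α₁ + μ) * c := mul_nonneg (by linarith) hc.le
      linarith [hfb, hKc]
    · -- Q touches the barrier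
      have hXt₁ : Q t₁ = -c := le_antisymm h hlowt₁.2.2.1
      refine component_case Q F p K t₁ c _ ht₁pos hcdef (hQ' t₁ ht₁pos) hXt₁ hFQ hbefore ?_
      rw [hXt₁, hcdef]
      have h1 : δ * -c ≤ δ * I t₁ := mul_le_mul_of_nonneg_left hlowt₁.2.1 hδ
      have h2 : 0 ≤ (ε + α₂ + μ) * c := mul_nonneg (by linarith) hc.le
      linarith [hKc]
    · -- R touches the barrier
      have hXt₁ : R t₁ = -c := le_antisymm h hlowt₁.2.2.2.1
      refine component_case R F p K t₁ c _ ht₁pos hcdef (hR' t₁ ht₁pos) hXt₁ hFR hbefore ?_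
      rw [hXt₁, hcdef]
      have h1 : ε * -c ≤ ε * Q t₁ := mul_le_mul_of_nonneg_left hlowt₁.2.2.1 hε
      have h2 : 0 ≤ (ω + μ) * c := mul_nonneg (by linarith) hc.le
      linarith [hKc]
    · -- B touches the barrier
      have hXt₁ : B t₁ = -c := le_antisymm h hlowt₁.2.2.2.2
      refine component_case B F p K t₁ c _ ht₁pos hcdef (hB' t₁ ht₁pos) hXt₁ hFB hbefore ?_
      rw [hXt₁, hcdef]
      have h1 : η * -c ≤ η * I t₁ := mul_le_mul_of_nonneg_left hlowt₁.2.1 hη.le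
      have h2 : 0 ≤ d * c := mul_nonneg hd.le hc.le
      linarith [hKc]
  -- conclude: F t ≥ 0
  have hF0 : 0 ≤ F t := by
    refine le_of_forall_pos_le_add ?_
    intro q hq
    set p : ℝ := min εm (q * Real.exp (-(K * t))) with hpdef
    have hp : 0 < p := lt_min hεm (by positivity)
    have hmt := hmain p hp (min_le_left _ _) t h0.le le_rfl
    have hpe : p * Real.exp (K * t) ≤ q := by
      calc p * Real.exp (K * t) ≤ (q * Real.exp (-(K * t))) * Real.exp (K * t) :=
            mul_le_mul_of_nonneg_right (min_le_right _ _) (Real.exp_pos _).le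
        _ = q := by rw [mul_assoc, ← Real.exp_add]; simp
    linarith
  exact ⟨le_trans hF0 (hFS t), le_trans hF0 (hFI t), le_trans hF0 (hFQ t),
    le_trans hF0 (hFR t), le_trans hF0 (hFB t)⟩
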